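/- arXiv:1711.05935 — 4 statements merged into one kernel-verified Lean document; each statement's English description precedes it below -/
import Mathlib

section
/- Let V be a real inner product space of dimension 2n+1 (n ≥ 1) equipped with an almost contact metric algebra (φ, ξ, η), and let Q be a self-adjoint endomorphism of V satisfying Qξ = 2n·ξ and Q∘φ + φ∘Q = 4n·φ. Then the trace of Q equals 2n(2n+1). -/
open scoped RealInnerProductSpace

/-- In an almost contact metric algebra `(φ, ξ, η)` on a real inner
product space `V` of dimension `2n+1` (`n ≥ 1`), if a self-adjoint endomorphism `Q`
satisfies `Qξ = 2n·ξ` and `Q∘φ + φ∘Q = 4n·φ`, then `tr Q = 2n(2n+1)`. -/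
theorem stmt_1 {V : Type*} [NormedAddCommGroup V] [InnerProductSpace ℝ V]
    [FiniteDimensional ℝ V] (n : ℕ) (hn : 1 ≤ n)
    (hdim : Module.finrank ℝ V = 2 * n + 1)
    (ξ : V) (hξ : ‖ξ‖ = 1) (φ : V →ₗ[ℝ] V)
    (hφξ : φ ξ = 0)
    (hφ2 : ∀ X : V, φ (φ X) = -X + ⟪X, ξ⟫ • ξ)
    (hφm : ∀ X Y : V, ⟪φ X, φ Y⟫ = ⟪X, Y⟫ - ⟪X, ξ⟫ * ⟪Y, ξ⟫)
    (Q : V →ₗ[ℝ] V) (hQ : Q.IsSymmetric)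
    (hQξ : Q ξ = ((2 * n : ℝ)) • ξ)
    (hQφ : ∀ X : V, Q (φ X) + φ (Q X) = ((4 * n : ℝ)) • φ X) :
    LinearMap.trace ℝ V Q = 2 * n * (2 * n + 1) := by
  have hξξ : ⟪ξ, ξ⟫ = 1 := by
    rw [real_inner_self_eq_norm_sq, hξ]; norm_num
  -- the coinner functional
  set f : V →ₗ[ℝ] ℝ := (innerSL ℝ ξ).toLinearMap with hf
  have hfX : ∀ X : V, f X = ⟪X, ξ⟫ := fun X => real_inner_comm X ξ
  -- rank-one projection P X = ⟪X, ξ⟫ • ξ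
  set P : V →ₗ[ℝ] V := (LinearMap.toSpanSingleton ℝ V ξ).comp f with hP
  have hPX : ∀ X : V, P X = ⟪X, ξ⟫ • ξ := by
    intro X
    simp [hP, LinearMap.toSpanSingleton_apply, hfX]
  have htrP : LinearMap.trace ℝ V P = 1 := by
    rw [hP, LinearMap.trace_comp_comm']
    have : f.comp (LinearMap.toSpanSingleton ℝ V ξ) = (1 : ℝ) • LinearMap.id := by
      ext; simp [hfX, hξξ, hξ]
    rw [this]
    simp [Module.finrank_self]
  have hQP : Q.comp P = (2 * (n : ℝ)) • P := by
    ext X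
    simp [hPX, hQξ, smul_smul, mul_comm]
  have htrQP : LinearMap.trace ℝ V (Q.comp P) = 2 * n := by
    rw [hQP, map_smul, htrP, smul_eq_mul, mul_one]
  have hφφ : φ.comp φ = -LinearMap.id + P := by
    ext X; simp [hφ2, hPX]
  -- trace of φ∘Q∘φ, two ways
  have h1 : LinearMap.trace ℝ V (φ.comp (Q.comp φ)) =
      -(LinearMap.trace ℝ V Q) + 2 * n := by
    rw [LinearMap.trace_comp_comm']
    have : (Q.comp φ).comp φ = -Q + Q.comp P := by
      ext X; simp [hφ2, hPX]
    rw [this, map_add, map_neg, htrQP]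
  have h2 : φ.comp (Q.comp φ) = Q - (4 * (n : ℝ)) • LinearMap.id + (2 * (n : ℝ)) • P := by
    ext X
    have e1 := hQφ (φ X)
    have e2 : φ (Q (φ X)) = (4 * (n : ℝ)) • φ (φ X) - Q (φ (φ X)) := by
      rw [← e1]; abel
    simp only [LinearMap.comp_apply, e2, hφ2]
    rw [map_add, map_neg, map_smul, hQξ]
    simp only [LinearMap.sub_apply, LinearMap.add_apply, LinearMap.smul_apply,
      LinearMap.id_apply, hPX]
    module
  have htrid : LinearMap.trace ℝ V (LinearMap.id : V →ₗ[ℝ] V) = (2 * n + 1 : ℝ) := by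
    rw [LinearMap.trace_id, hdim]; push_cast; ring
  rw [h2] at h1
  rw [map_add, map_sub, map_smul, map_smul, htrid, htrP] at h1
  simp only [smul_eq_mul] at h1
  linarith
end

section
/- Let V be a real inner product space of dimension 2n+1 (n ≥ 1) equipped with an almost contact metric algebra (φ, ξ, η), and let Q be a self-adjoint endomorphism of V satisfying Qξ = 2n·ξ, Q∘φ + φ∘Q = 4n·φ, and tr(Q²) = 2n·tr(Q). Then Q = 2n·id. -/
open scoped RealInnerProductSpace

lemma trace_inner_aux {V : Type*} [NormedAddCommGroup V] [InnerProductSpace ℝ V]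
    [FiniteDimensional ℝ V] (T : V →ₗ[ℝ] V) :
    LinearMap.trace ℝ V T = ∑ i, ⟪(stdOrthonormalBasis ℝ V) i, T ((stdOrthonormalBasis ℝ V) i)⟫ := by
  classical
  rw [LinearMap.trace_eq_matrix_trace ℝ (stdOrthonormalBasis ℝ V).toBasis T, Matrix.trace]
  congr 1
  ext i
  rw [Matrix.diag_apply, LinearMap.toMatrix_apply,
    (stdOrthonormalBasis ℝ V).coe_toBasis_repr_apply,
    (stdOrthonormalBasis ℝ V).repr_apply_apply,
    (stdOrthonormalBasis ℝ V).coe_toBasis, real_inner_comm]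

/-- In an almost contact metric algebra `(φ, ξ, η)` on a real inner
product space `V` of dimension `2n+1` (`n ≥ 1`), if a self-adjoint endomorphism `Q`
satisfies `Qξ = 2n·ξ`, `Q∘φ + φ∘Q = 4n·φ` and `tr(Q²) = 2n·tr Q`, then `Q = 2n·id`. -/
theorem stmt_3 {V : Type*} [NormedAddCommGroup V] [InnerProductSpace ℝ V]
    [FiniteDimensional ℝ V] (n : ℕ) (hn : 1 ≤ n)
    (hdim : Module.finrank ℝ V = 2 * n + 1)
    (ξ : V) (hξ : ‖ξ‖ = 1) (φ : V →ₗ[ℝ] V)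
    (hφξ : φ ξ = 0)
    (hφ2 : ∀ X : V, φ (φ X) = -X + ⟪X, ξ⟫ • ξ)
    (hφm : ∀ X Y : V, ⟪φ X, φ Y⟫ = ⟪X, Y⟫ - ⟪X, ξ⟫ * ⟪Y, ξ⟫)
    (Q : V →ₗ[ℝ] V) (hQ : Q.IsSymmetric)
    (hQξ : Q ξ = ((2 * n : ℝ)) • ξ)
    (hQφ : ∀ X : V, Q (φ X) + φ (Q X) = ((4 * n : ℝ)) • φ X)
    (htr : LinearMap.trace ℝ V (Q ∘ₗ Q) = 2 * n * LinearMap.trace ℝ V Q) :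
    Q = ((2 * n : ℝ)) • LinearMap.id := by
  classical
  set c : ℝ := 2 * n with hc
  set P : V →ₗ[ℝ] V := Q - c • LinearMap.id with hP
  have hPapp : ∀ X : V, P X = Q X - c • X := by
    intro X; simp [hP]
  have hPξ : P ξ = 0 := by
    rw [hPapp, hQξ, sub_self]
  have hPsym : P.IsSymmetric := by
    intro x y
    simp only [hPapp, inner_sub_left, inner_sub_right, inner_smul_left, inner_smul_right, hQ x y,
      starRingEnd_apply, star_trivial]
    try ring
  have hPinnξ : ∀ X : V, ⟪P X, ξ⟫ = 0 := by
    intro X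
    rw [hPsym X ξ, hPξ, inner_zero_right]
  have hPφ : ∀ X : V, P (φ X) = - φ (P X) := by
    intro X
    have h := hQφ X
    rw [hPapp, hPapp]
    rw [map_sub, map_smul]
    have : Q (φ X) = (4 * n : ℝ) • φ X - φ (Q X) := by linear_combination (norm := module) h
    rw [this, hc]
    module
  -- φ ∘ P ∘ φ = P
  have hcomp : φ ∘ₗ P ∘ₗ φ = P := by
    ext X
    simp only [LinearMap.comp_apply]
    rw [hPφ, map_neg, hφ2, hPinnξ]
    simp
  -- P ∘ φ ∘ φ = -P
  have hcomp2 : (P ∘ₗ φ) ∘ₗ φ = -P := by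
    ext X
    simp only [LinearMap.comp_apply, LinearMap.neg_apply]
    rw [hφ2, map_add, map_neg, map_smul, hPξ, smul_zero, add_zero]
  have htrP : LinearMap.trace ℝ V P = 0 := by
    have h1 : LinearMap.trace ℝ V (φ ∘ₗ (P ∘ₗ φ)) = LinearMap.trace ℝ V ((P ∘ₗ φ) ∘ₗ φ) :=
      LinearMap.trace_comp_comm' (P ∘ₗ φ) φ
    rw [← LinearMap.comp_assoc, hcomp2] at h1
    rw [LinearMap.comp_assoc, hcomp, map_neg] at h1
    linarith
  -- trace (P ∘ P) = 0
  have hQeq : Q = P + c • LinearMap.id := by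
    rw [hP]; abel
  have htrQ : LinearMap.trace ℝ V Q = c * (2 * n + 1) := by
    rw [hQeq, map_add, htrP, map_smul, LinearMap.trace_id, hdim, smul_eq_mul]
    push_cast
    ring
  have htrPP : LinearMap.trace ℝ V (P ∘ₗ P) = 0 := by
    have hexp : Q ∘ₗ Q = P ∘ₗ P + (2 * c) • P + (c * c) • LinearMap.id := by
      rw [hQeq]
      ext X
      simp only [LinearMap.add_apply, LinearMap.comp_apply, LinearMap.smul_apply,
        LinearMap.id_apply, map_add, map_smul]
      module
    rw [hexp, map_add, map_add, map_smul, map_smul, htrP, LinearMap.trace_id, hdim,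
      htrQ, smul_eq_mul] at htr
    push_cast at htr
    rw [hc] at htr
    push_cast at htr
    simp only [smul_eq_mul] at htr
    linear_combination htr
  -- conclude P = 0
  set b := stdOrthonormalBasis ℝ V with hb
  have hsum : ∑ i, ⟪P (b i), P (b i)⟫ = 0 := by
    rw [← htrPP, trace_inner_aux]
    refine Finset.sum_congr rfl fun i _ => ?_
    rw [LinearMap.comp_apply, ← hPsym (b i) (P (b i)), real_inner_comm]
  have hPb : ∀ i, P (b i) = 0 := by
    intro i
    have h0 : ⟪P (b i), P (b i)⟫ = 0 := by
      have := (Finset.sum_eq_zero_iff_of_nonneg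
        (fun j _ => real_inner_self_nonneg)).mp hsum i (Finset.mem_univ i)
      exact this
    exact inner_self_eq_zero.mp h0
  have hP0 : P = 0 := by
    apply b.toBasis.ext
    intro i
    simpa using hPb i
  have : Q - c • LinearMap.id = 0 := by rw [← hP, hP0]
  rw [sub_eq_zero] at this
  rw [this, hc]
end

section
/- Let V be a real inner product space of dimension 2n+1 (n ≥ 1) equipped with an almost contact metric algebra (φ, ξ, η), let Q be a self-adjoint endomorphism of V with Qξ = 2n·ξ, let α be a linear functional on V, and let c be a real number. Suppose that for all X, Y ∈ V: α(X)η(Y) − α(Y)η(X) − 8nc·⟨φX, Y⟩ − 2c·⟨QφY + φQY, X⟩ = 0. Then c·(QφY + φQY − 4n·φY) = 0 for all Y ∈ V; in particular, if c ≠ 0 then Q∘φ + φ∘Q = 4n·φ. -/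
open scoped RealInnerProductSpace

/-- In an almost contact metric algebra `(φ, ξ, η)` on a real inner
product space `V` of dimension `2n+1` (`n ≥ 1`), let `Q` be self-adjoint with
`Qξ = 2n·ξ`, let `α` be a linear functional and `c ∈ ℝ`. If for all `X, Y`:
`α(X)η(Y) − α(Y)η(X) − 8nc·⟪φX, Y⟫ − 2c·⟪QφY + φQY, X⟫ = 0`, then
`c·(QφY + φQY − 4n·φY) = 0` for all `Y`; in particular, if `c ≠ 0` then
`Q∘φ + φ∘Q = 4n·φ`. -/
theorem stmt_5 {V : Type*} [NormedAddCommGroup V] [InnerProductSpace ℝ V]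
    [FiniteDimensional ℝ V] (n : ℕ) (hn : 1 ≤ n)
    (hdim : Module.finrank ℝ V = 2 * n + 1)
    (ξ : V) (hξ : ‖ξ‖ = 1) (φ : V →ₗ[ℝ] V)
    (hφξ : φ ξ = 0)
    (hφ2 : ∀ X : V, φ (φ X) = -X + ⟪X, ξ⟫ • ξ)
    (hφm : ∀ X Y : V, ⟪φ X, φ Y⟫ = ⟪X, Y⟫ - ⟪X, ξ⟫ * ⟪Y, ξ⟫)
    (Q : V →ₗ[ℝ] V) (hQ : Q.IsSymmetric)
    (hQξ : Q ξ = ((2 * n : ℝ)) • ξ)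
    (α : V →ₗ[ℝ] ℝ) (c : ℝ)
    (hmain : ∀ X Y : V,
      α X * ⟪Y, ξ⟫ - α Y * ⟪X, ξ⟫ - 8 * n * c * ⟪φ X, Y⟫
        - 2 * c * ⟪Q (φ Y) + φ (Q Y), X⟫ = 0) :
    (∀ Y : V, c • (Q (φ Y) + φ (Q Y) - ((4 * n : ℝ)) • φ Y) = 0) ∧
      (c ≠ 0 → ∀ Y : V, Q (φ Y) + φ (Q Y) = ((4 * n : ℝ)) • φ Y) := by
  have hξξ : ⟪ξ, ξ⟫ = 1 := by
    rw [real_inner_self_eq_norm_sq, hξ]; norm_num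
  -- η ∘ φ = 0
  have hηφ : ∀ X : V, ⟪φ X, ξ⟫ = 0 := by
    intro X
    have h1 := hφm (φ X) (φ X)
    have h2 := hφm X X
    rw [hφ2 X] at h1
    have hexp : ⟪-X + ⟪X, ξ⟫ • ξ, -X + ⟪X, ξ⟫ • ξ⟫
        = ⟪X, X⟫ - ⟪X, ξ⟫ * ⟪X, ξ⟫ := by
      simp only [inner_add_add_self, inner_neg_neg, inner_neg_left, inner_neg_right,
        real_inner_smul_left, real_inner_smul_right, hξξ, real_inner_comm X ξ]
      ring
    rw [hexp, h2] at h1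
    have : ⟪φ X, ξ⟫ * ⟪φ X, ξ⟫ = 0 := by linarith
    exact (mul_self_eq_zero).mp this
  -- φ is skew-adjoint
  have hskew : ∀ X Y : V, ⟪φ X, Y⟫ = -⟪X, φ Y⟫ := by
    intro X Y
    have hc2 : ⟪ξ, φ Y⟫ = (0 : ℝ) := by rw [real_inner_comm]; exact hηφ Y
    have h1 := hφm (φ X) Y
    rw [hφ2 X, hηφ X] at h1
    rw [inner_add_left, inner_neg_left, real_inner_smul_left, hc2] at h1
    linarith
  -- α X = α ξ * ⟪X, ξ⟫
  have hα : ∀ X : V, α X = α ξ * ⟪X, ξ⟫ := by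
    intro X
    have h := hmain X ξ
    rw [hφξ, map_zero, hQξ, map_smul, hφξ, smul_zero, add_zero, inner_zero_left,
      hηφ X, hξξ] at h
    linarith
  -- key pointwise identity
  have key : ∀ X Y : V, c * ⟪Q (φ Y) + φ (Q Y) - ((4 * n : ℝ)) • φ Y, X⟫ = 0 := by
    intro X Y
    have h := hmain X Y
    rw [hα X, hα Y] at h
    rw [inner_sub_left, real_inner_smul_left]
    have hs : ⟪φ X, Y⟫ = -⟪φ Y, X⟫ := by
      rw [hskew X Y, real_inner_comm]
    rw [hs] at h
    nlinarith [h]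
  have main : ∀ Y : V, c • (Q (φ Y) + φ (Q Y) - ((4 * n : ℝ)) • φ Y) = 0 := by
    intro Y
    have h0 : ⟪c • (Q (φ Y) + φ (Q Y) - ((4 * n : ℝ)) • φ Y),
        c • (Q (φ Y) + φ (Q Y) - ((4 * n : ℝ)) • φ Y)⟫ = 0 := by
      rw [real_inner_smul_left, real_inner_smul_right,
        key (Q (φ Y) + φ (Q Y) - ((4 * n : ℝ)) • φ Y) Y, mul_zero]
    exact inner_self_eq_zero.mp h0
  refine ⟨main, fun hc Y => ?_⟩
  rcases smul_eq_zero.mp (main Y) with h | h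
  · exact absurd h hc
  · rwa [sub_eq_zero] at h
end

section
/- Let V be a real inner product space of dimension 2n+1 (n ≥ 1) equipped with an almost contact metric algebra (φ, ξ, η), and let κ, μ be real numbers. Let h be a self-adjoint endomorphism of V satisfying h∘φ = −φ∘h and h² = (κ − 1)·φ², and define the endomorphism Q by QX = [2(n−1) − nμ]·X + [2(n−1) + μ]·hX + [2(1−n) + n(2κ + μ)]·η(X)ξ. If QφX + φQX − φQhX − hQφX − 4nκ·φX = 0 for all X ∈ V, then κ(μ − 2) = μ(n + 1). -/
open scoped RealInnerProductSpace

/-- In an almost contact metric algebra `(φ, ξ, η)` on a real inner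
product space `V` of dimension `2n+1` (`n ≥ 1`), let `κ, μ ∈ ℝ` and let `h` be a
self-adjoint endomorphism with `h∘φ = −φ∘h` and `h² = (κ−1)·φ²`, and let
`QX = [2(n−1) − nμ]·X + [2(n−1) + μ]·hX + [2(1−n) + n(2κ+μ)]·η(X)ξ`.
If `QφX + φQX − φQhX − hQφX − 4nκ·φX = 0` for all `X`, then `κ(μ−2) = μ(n+1)`. -/
theorem stmt_7 {V : Type*} [NormedAddCommGroup V] [InnerProductSpace ℝ V]
    [FiniteDimensional ℝ V] (n : ℕ) (hn : 1 ≤ n)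
    (hdim : Module.finrank ℝ V = 2 * n + 1)
    (ξ : V) (hξ : ‖ξ‖ = 1) (φ : V →ₗ[ℝ] V)
    (hφξ : φ ξ = 0)
    (hφ2 : ∀ X : V, φ (φ X) = -X + ⟪X, ξ⟫ • ξ)
    (hφm : ∀ X Y : V, ⟪φ X, φ Y⟫ = ⟪X, Y⟫ - ⟪X, ξ⟫ * ⟪Y, ξ⟫)
    (κ μ : ℝ) (h : V →ₗ[ℝ] V) (hh : h.IsSymmetric)
    (hhφ : ∀ X : V, h (φ X) = -φ (h X))
    (hh2 : ∀ X : V, h (h X) = (κ - 1) • φ (φ X))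
    (Q : V →ₗ[ℝ] V)
    (hQdef : ∀ X : V, Q X = (2 * ((n : ℝ) - 1) - n * μ) • X
      + (2 * ((n : ℝ) - 1) + μ) • h X
      + (2 * (1 - (n : ℝ)) + n * (2 * κ + μ)) • (⟪X, ξ⟫ • ξ))
    (hmain : ∀ X : V, Q (φ X) + φ (Q X) - φ (Q (h X)) - h (Q (φ X))
      - ((4 * n * κ : ℝ)) • φ X = 0) :
    κ * (μ - 2) = μ * ((n : ℝ) + 1) := by
  -- η(φX) = 0
  have hξξ : ⟪ξ, ξ⟫ = (1:ℝ) := by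
    rw [real_inner_self_eq_norm_sq, hξ]; norm_num
  have hηφ : ∀ X : V, ⟪φ X, ξ⟫ = 0 := by
    intro X
    have h1 := hφm (φ X) (φ X)
    have h2 := hφm X X
    rw [hφ2 X] at h1
    have h3 : ⟪(-X + ⟪X, ξ⟫ • ξ : V), -X + ⟪X, ξ⟫ • ξ⟫ = ⟪X, X⟫ - ⟪X, ξ⟫ * ⟪X, ξ⟫ := by
      simp only [inner_add_add_self, inner_neg_left, inner_neg_right, neg_neg, real_inner_smul_left, real_inner_smul_right, real_inner_comm X ξ, hξξ]
      ring
    rw [h3, h2] at h1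
    have : ⟪φ X, ξ⟫ * ⟪φ X, ξ⟫ = 0 := by linarith
    exact mul_self_eq_zero.mp this
  -- hξ = 0
  have hhξ : h ξ = 0 := by
    have h1 : ⟪h ξ, h ξ⟫ = (0:ℝ) := by
      rw [hh ξ (h ξ), hh2 ξ, hφξ]
      simp
    exact inner_self_eq_zero.mp h1
  have hηh : ∀ X : V, ⟪h X, ξ⟫ = 0 := by
    intro X
    rw [hh X ξ, hhξ, inner_zero_right]
  -- φ³ = -φ
  have hφ3 : ∀ X : V, φ (φ (φ X)) = -(φ X) := by
    intro X
    rw [hφ2 X]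
    simp [hφξ]
  -- find nonzero X orthogonal to ξ
  have hξne : ξ ≠ 0 := by
    intro hc; rw [hc, norm_zero] at hξ; norm_num at hξ
  have hK : (ℝ ∙ ξ)ᗮ ≠ ⊥ := by
    intro hc
    have h1 := Submodule.finrank_add_finrank_orthogonal (K := (ℝ ∙ ξ : Submodule ℝ V))
    rw [hc, finrank_bot, finrank_span_singleton hξne, hdim] at h1
    omega
  obtain ⟨X, hXmem, hXne⟩ := Submodule.exists_mem_ne_zero_of_ne_bot hK
  have hηX : ⟪X, ξ⟫ = 0 := by
    have := (Submodule.mem_orthogonal (ℝ ∙ ξ) X).mp hXmem ξ (Submodule.mem_span_singleton_self ξ)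
    rw [real_inner_comm]; exact this
  -- φ X ≠ 0
  have hφXne : φ X ≠ 0 := by
    intro hc
    have h1 := hφm X X
    rw [hc, hηX, inner_zero_left] at h1
    have : ⟪X, X⟫ = (0:ℝ) := by linarith
    exact hXne (inner_self_eq_zero.mp this)
  -- main computation
  have e := hmain X
  simp only [hQdef, map_add, map_smul, map_neg, hhφ, hh2, hφξ, hφ3, hηφ, hηh, hηX,
    hhξ, zero_smul, smul_zero, add_zero, smul_neg] at e
  have e2 : (2 * (2 * ((n : ℝ) - 1) - n * μ) + 2 * (2 * ((n : ℝ) - 1) + μ) * (κ - 1)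
      - 4 * n * κ) • φ X = 0 := by
    rw [← e]; module
  rcases smul_eq_zero.mp e2 with hc | hc
  · linear_combination hc / 2
  · exact absurd hc hφXne
end
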